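/- The double cross coproduct A ⋈^{φ,ψ} H is a bialgebra: the map Δ_D is coassociative, i.e. (Δ_D ⊗ id_{A⊗H}) ∘ Δ_D = (id_{A⊗H} ⊗ Δ_D) ∘ Δ_D, has counit ε_A ⊗ ε_H, i.e. ((ε_A ⊗ ε_H) ⊗ id) ∘ Δ_D = id_{A⊗H} = (id ⊗ (ε_A ⊗ ε_H)) ∘ Δ_D, and Δ_D is an algebra morphism from the tensor-product algebra A ⊗ H to the tensor-product algebra (A ⊗ H) ⊗ (A ⊗ H): Δ_D(u·v) = Δ_D(u)·Δ_D(v) for all u, v ∈ A ⊗ H and Δ_D(1_A ⊗ 1_H) = (1_A ⊗ 1_H) ⊗ (1_A ⊗ 1_H). -/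

import Mathlib

open TensorProduct

noncomputable section

universe u

variable {k A H X : Type u} [Field k]
  [Ring A] [Ring H] [Ring X]
  [Bialgebra k A] [Bialgebra k H] [Bialgebra k X]

/-- ζ := (p_H ⊗ p_A) ∘ Δ_X ∘ ξ⁻¹ : A ⊗ H → H ⊗ A. -/
def zetaC (pA : X →ₐc[k] A) (pH : X →ₐc[k] H) (ξ : X ≃ₗ[k] A ⊗[k] H) :
    A ⊗[k] H →ₗ[k] H ⊗[k] A :=
  TensorProduct.map (pH : X →ₗ[k] H) (pA : X →ₗ[k] A) ∘ₗ
    (Coalgebra.comul : X →ₗ[k] X ⊗[k] X) ∘ₗ ξ.symm.toLinearMap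

/-- φ : A → H ⊗ A, φ(a) := ζ(a ⊗ 1_H). -/
def phiC (pA : X →ₐc[k] A) (pH : X →ₐc[k] H) (ξ : X ≃ₗ[k] A ⊗[k] H) :
    A →ₗ[k] H ⊗[k] A :=
  zetaC pA pH ξ ∘ₗ (TensorProduct.mk k A H).flip (1 : H)

/-- ψ : H → H ⊗ A, ψ(h) := ζ(1_A ⊗ h). -/
def psiC (pA : X →ₐc[k] A) (pH : X →ₐc[k] H) (ξ : X ≃ₗ[k] A ⊗[k] H) :
    H →ₗ[k] H ⊗[k] A :=
  zetaC pA pH ξ ∘ₗ TensorProduct.mk k A H (1 : A)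

/-- The double cross coproduct comultiplication Δ_D : A ⊗ H → (A ⊗ H) ⊗ (A ⊗ H),
Δ_D(a ⊗ h) = Σ (a₁ ⊗ a₂^{[-1]}·h₁^{[-1]}) ⊗ (a₂^{[0]}·h₁^{[0]} ⊗ h₂),
where φ(a₂) = Σ a₂^{[-1]} ⊗ a₂^{[0]} and ψ(h₁) = Σ h₁^{[-1]} ⊗ h₁^{[0]}. -/
def DeltaD (pA : X →ₐc[k] A) (pH : X →ₐc[k] H) (ξ : X ≃ₗ[k] A ⊗[k] H) :
    A ⊗[k] H →ₗ[k] (A ⊗[k] H) ⊗[k] (A ⊗[k] H) :=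
  (TensorProduct.assoc k A H (A ⊗[k] H)).symm.toLinearMap ∘ₗ
  TensorProduct.map LinearMap.id (TensorProduct.assoc k H A H).toLinearMap ∘ₗ
  TensorProduct.map LinearMap.id
    (TensorProduct.map
      (LinearMap.mul' k (H ⊗[k] A) ∘ₗ
        TensorProduct.map (phiC pA pH ξ) (psiC pA pH ξ))
      LinearMap.id) ∘ₗ
  TensorProduct.map LinearMap.id (TensorProduct.assoc k A H H).symm.toLinearMap ∘ₗ
  (TensorProduct.assoc k A A (H ⊗[k] H)).toLinearMap ∘ₗ
  TensorProduct.map (Coalgebra.comul : A →ₗ[k] A ⊗[k] A)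
    (Coalgebra.comul : H →ₗ[k] H ⊗[k] H)


/-- tensor map of two multiplicative linear maps is multiplicative -/
lemma aux_map_mul {A₁ B₁ A₂ B₂ : Type u} [Ring A₁] [Ring B₁] [Ring A₂] [Ring B₂]
    [Algebra k A₁] [Algebra k B₁] [Algebra k A₂] [Algebra k B₂]
    (f : A₁ →ₗ[k] A₂) (g : B₁ →ₗ[k] B₂)
    (hf : ∀ a a', f (a * a') = f a * f a') (hg : ∀ b b', g (b * b') = g b * g b')
    (u v : A₁ ⊗[k] B₁) :
    TensorProduct.map f g (u * v) = TensorProduct.map f g u * TensorProduct.map f g v := by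
  induction u with
  | zero => simp
  | add u₁ u₂ h1 h2 => simp [add_mul, h1, h2]
  | tmul a b =>
    induction v with
    | zero => simp
    | add v₁ v₂ h1 h2 => simp [mul_add, h1, h2]
    | tmul c d => simp [Algebra.TensorProduct.tmul_mul_tmul, hf, hg]


section Lemmas

variable (pA : X →ₐc[k] A) (pH : X →ₐc[k] H) (ξ : X ≃ₗ[k] A ⊗[k] H)

lemma zeta_xi_apply (x : X) :
    zetaC pA pH ξ (ξ x)
      = TensorProduct.map (pH : X →ₗ[k] H) (pA : X →ₗ[k] A) (Coalgebra.comul x) := by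
  simp [zetaC]

variable (hξ : ∀ x : X, ξ x = TensorProduct.map (pA : X →ₗ[k] A) (pH : X →ₗ[k] H)
      (Coalgebra.comul x))

include hξ

lemma xi_mul (x y : X) : ξ (x * y) = ξ x * ξ y := by
  rw [hξ, hξ, hξ, Bialgebra.comul_mul]
  exact aux_map_mul _ _ (map_mul pA) (map_mul pH) _ _

lemma xi_one : ξ 1 = 1 := by
  rw [hξ, Bialgebra.comul_one, Algebra.TensorProduct.one_def, TensorProduct.map_tmul]
  simp [Algebra.TensorProduct.one_def]

lemma zeta_mul (u v : A ⊗[k] H) :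
    zetaC pA pH ξ (u * v) = zetaC pA pH ξ u * zetaC pA pH ξ v := by
  obtain ⟨x, rfl⟩ := ξ.surjective u
  obtain ⟨y, rfl⟩ := ξ.surjective v
  rw [← xi_mul pA pH ξ hξ, zeta_xi_apply, zeta_xi_apply, zeta_xi_apply,
    Bialgebra.comul_mul]
  exact aux_map_mul _ _ (map_mul pH) (map_mul pA) _ _

lemma hCp (b : A) (c : H) :
    phiC pA pH ξ b * psiC pA pH ξ c = zetaC pA pH ξ (b ⊗ₜ[k] c) := by
  have : (b ⊗ₜ[k] (1:H)) * ((1:A) ⊗ₜ[k] c) = b ⊗ₜ[k] c := by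
    rw [Algebra.TensorProduct.tmul_mul_tmul, mul_one, one_mul]
  rw [phiC, psiC, LinearMap.comp_apply, LinearMap.comp_apply,
    ← zeta_mul pA pH ξ hξ]
  simp only [TensorProduct.mk_apply, LinearMap.flip_apply, TensorProduct.mk_apply, this]

omit hξ

-- abbreviations
local notation "Δ" => (Coalgebra.comul : X →ₗ[k] X ⊗[k] X)
local notation "aL" => (pA : X →ₗ[k] A)
local notation "hL" => (pH : X →ₗ[k] H)

lemma L0 :
    TensorProduct.map (Coalgebra.comul : A →ₗ[k] A ⊗[k] A)
        (Coalgebra.comul : H →ₗ[k] H ⊗[k] H) ∘ₗ TensorProduct.map aL hL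
      = TensorProduct.map (TensorProduct.map aL aL) (TensorProduct.map hL hL) ∘ₗ
        TensorProduct.map Δ Δ := by
  have h1 : ((pA : X →ₗ[k] A)) = ((pA : X →ₗc[k] A) : X →ₗ[k] A) := rfl
  have h2 : ((pH : X →ₗ[k] H)) = ((pH : X →ₗc[k] H) : X →ₗ[k] H) := rfl
  rw [← TensorProduct.map_comp, ← TensorProduct.map_comp, h1, h2,
    CoalgHomClass.map_comp_comul (pA : X →ₗc[k] A),
    CoalgHomClass.map_comp_comul (pH : X →ₗc[k] H)]

lemma B2 (x : X) :
    TensorProduct.map (LinearMap.id : X →ₗ[k] X) (TensorProduct.assoc k X X X).symm.toLinearMap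
        ((TensorProduct.assoc k X X (X ⊗[k] X)) (TensorProduct.map Δ Δ (Δ x)))
      = TensorProduct.map LinearMap.id (TensorProduct.map Δ LinearMap.id)
          (TensorProduct.map LinearMap.id Δ (Δ x)) := by
  have h1 : (TensorProduct.map Δ Δ : X ⊗[k] X →ₗ[k] (X ⊗[k] X) ⊗[k] (X ⊗[k] X))
      = TensorProduct.map LinearMap.id Δ ∘ₗ TensorProduct.map Δ LinearMap.id := by
    rw [← TensorProduct.map_comp, LinearMap.id_comp, LinearMap.comp_id]
  have h2 := TensorProduct.map_map_comp_assoc_eq (R := k)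
    (LinearMap.id : X →ₗ[k] X) (LinearMap.id : X →ₗ[k] X) Δ
  rw [TensorProduct.map_id] at h2
  have h2' := LinearMap.congr_fun h2 ((Δ : X →ₗ[k] X ⊗[k] X).rTensor X (Δ x))
  simp only [LinearMap.comp_apply, LinearEquiv.coe_coe] at h2'
  show ((TensorProduct.assoc k X X X).symm.toLinearMap).lTensor X
        ((TensorProduct.assoc k X X (X ⊗[k] X)) (TensorProduct.map Δ Δ (Δ x)))
      = ((Δ : X →ₗ[k] X ⊗[k] X).rTensor X).lTensor X
          ((Δ : X →ₗ[k] X ⊗[k] X).lTensor X (Δ x))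
  rw [h1]
  have e1 : (TensorProduct.map (LinearMap.id : X ⊗[k] X →ₗ[k] X ⊗[k] X) Δ ∘ₗ
        TensorProduct.map Δ (LinearMap.id : X →ₗ[k] X)) (Δ x)
      = TensorProduct.map (LinearMap.id : X ⊗[k] X →ₗ[k] X ⊗[k] X) Δ
          ((Δ : X →ₗ[k] X ⊗[k] X).rTensor X (Δ x)) := rfl
  rw [e1, ← h2', Coalgebra.coassoc_apply]
  have e2 : TensorProduct.map (LinearMap.id : X →ₗ[k] X)
        (TensorProduct.map (LinearMap.id : X →ₗ[k] X) Δ)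
      = ((Δ : X →ₗ[k] X ⊗[k] X).lTensor X).lTensor X := rfl
  rw [e2, ← LinearMap.lTensor_comp_apply, ← LinearMap.lTensor_comp_apply,
    ← LinearMap.lTensor_comp_apply]
  have e3 : ((TensorProduct.assoc k X X X).symm.toLinearMap ∘ₗ
        (Δ : X →ₗ[k] X ⊗[k] X).lTensor X) ∘ₗ Δ
      = ((Δ : X →ₗ[k] X ⊗[k] X).rTensor X) ∘ₗ Δ := by
    rw [LinearMap.comp_assoc]
    exact Coalgebra.coassoc_symm
  rw [e3, LinearMap.lTensor_comp_apply]

include hξ in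
lemma P2 :
    (TensorProduct.map (LinearMap.id : A →ₗ[k] A)
      (TensorProduct.map
        (LinearMap.mul' k (H ⊗[k] A) ∘ₗ
          TensorProduct.map (phiC pA pH ξ) (psiC pA pH ξ))
        (LinearMap.id : H →ₗ[k] H))) ∘ₗ
    (TensorProduct.map (LinearMap.id : A →ₗ[k] A)
      (TensorProduct.assoc k A H H).symm.toLinearMap) ∘ₗ
    (TensorProduct.assoc k A A (H ⊗[k] H)).toLinearMap ∘ₗ
    (TensorProduct.map (TensorProduct.map aL aL) (TensorProduct.map hL hL))
    = TensorProduct.map aL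
        (TensorProduct.map (zetaC pA pH ξ ∘ₗ TensorProduct.map aL hL) hL) ∘ₗ
      TensorProduct.map (LinearMap.id : X →ₗ[k] X)
        (TensorProduct.assoc k X X X).symm.toLinearMap ∘ₗ
      (TensorProduct.assoc k X X (X ⊗[k] X)).toLinearMap := by
  apply TensorProduct.ext_fourfold'
  intro x y z w
  simp only [LinearMap.comp_apply, LinearEquiv.coe_coe, TensorProduct.map_tmul,
    TensorProduct.assoc_tmul, TensorProduct.assoc_symm_tmul, LinearMap.id_coe, id_eq,
    LinearMap.mul'_apply]
  rw [hCp pA pH ξ hξ]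

lemma P1 :
    (TensorProduct.assoc k A H (A ⊗[k] H)).symm.toLinearMap ∘ₗ
    (TensorProduct.map (LinearMap.id : A →ₗ[k] A) (TensorProduct.assoc k H A H).toLinearMap) ∘ₗ
    (TensorProduct.map aL (TensorProduct.map (TensorProduct.map hL aL) hL)) ∘ₗ
    (TensorProduct.map (LinearMap.id : X →ₗ[k] X)
      (TensorProduct.assoc k X X X).symm.toLinearMap) ∘ₗ
    (TensorProduct.assoc k X X (X ⊗[k] X)).toLinearMap
    = TensorProduct.map (TensorProduct.map aL hL) (TensorProduct.map aL hL) := by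
  apply TensorProduct.ext_fourfold'
  intro x y z w
  simp only [LinearMap.comp_apply, LinearEquiv.coe_coe, TensorProduct.map_tmul,
    TensorProduct.assoc_tmul, TensorProduct.assoc_symm_tmul, LinearMap.id_coe, id_eq]


include hξ in
lemma zxd : (zetaC pA pH ξ ∘ₗ TensorProduct.map aL hL) ∘ₗ Δ
    = TensorProduct.map hL aL ∘ₗ Δ := by
  refine LinearMap.ext fun x => ?_
  simp only [LinearMap.comp_apply]
  rw [← hξ x, zeta_xi_apply]

include hξ in
lemma L5 : TensorProduct.map aL
      (TensorProduct.map (zetaC pA pH ξ ∘ₗ TensorProduct.map aL hL) hL) ∘ₗ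
    TensorProduct.map (LinearMap.id : X →ₗ[k] X)
      (TensorProduct.map Δ (LinearMap.id : X →ₗ[k] X))
    = TensorProduct.map aL (TensorProduct.map (TensorProduct.map hL aL) hL) ∘ₗ
    TensorProduct.map (LinearMap.id : X →ₗ[k] X)
      (TensorProduct.map Δ (LinearMap.id : X →ₗ[k] X)) := by
  simp only [← TensorProduct.map_comp, LinearMap.comp_id, LinearMap.id_comp]
  rw [zxd pA pH ξ hξ]

lemma L7 (hξ : ∀ x : X, ξ x = TensorProduct.map aL hL (Coalgebra.comul x)) :
    TensorProduct.map (TensorProduct.map aL hL) (TensorProduct.map aL hL) ∘ₗ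
      TensorProduct.map Δ Δ
    = TensorProduct.map ξ.toLinearMap ξ.toLinearMap := by
  rw [← TensorProduct.map_comp]
  have : TensorProduct.map aL hL ∘ₗ Δ = ξ.toLinearMap :=
    LinearMap.ext fun x => (hξ x).symm
  rw [this]

include hξ in
lemma hkey (x : X) :
    DeltaD pA pH ξ (ξ x)
      = TensorProduct.map ξ.toLinearMap ξ.toLinearMap (Δ x) := by
  have step1 : DeltaD pA pH ξ (ξ x)
      = (TensorProduct.assoc k A H (A ⊗[k] H)).symm.toLinearMap
        ((TensorProduct.map (LinearMap.id : A →ₗ[k] A)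
            (TensorProduct.assoc k H A H).toLinearMap)
          ((TensorProduct.map (LinearMap.id : A →ₗ[k] A)
      (TensorProduct.map
        (LinearMap.mul' k (H ⊗[k] A) ∘ₗ
          TensorProduct.map (phiC pA pH ξ) (psiC pA pH ξ))
        (LinearMap.id : H →ₗ[k] H)))
          ((TensorProduct.map (LinearMap.id : A →ₗ[k] A)
              (TensorProduct.assoc k A H H).symm.toLinearMap)
            ((TensorProduct.assoc k A A (H ⊗[k] H)).toLinearMap
              ((TensorProduct.map (Coalgebra.comul : A →ₗ[k] A ⊗[k] A)
                  (Coalgebra.comul : H →ₗ[k] H ⊗[k] H))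
                (ξ x)))))) := rfl
  rw [step1, hξ x]
  simp only [LinearEquiv.coe_coe]
  have step2 := LinearMap.congr_fun (L0 pA pH) (Δ x)
  simp only [LinearMap.comp_apply] at step2
  rw [step2]
  have step3 := LinearMap.congr_fun (P2 pA pH ξ hξ) (TensorProduct.map Δ Δ (Δ x))
  simp only [LinearMap.comp_apply, LinearEquiv.coe_coe] at step3
  rw [step3, B2 x]
  have step5 := LinearMap.congr_fun (L5 pA pH ξ hξ)
    (TensorProduct.map (LinearMap.id : X →ₗ[k] X) Δ (Δ x))
  simp only [LinearMap.comp_apply] at step5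
  rw [step5, ← B2 x]
  have step6 := LinearMap.congr_fun (P1 pA pH) (TensorProduct.map Δ Δ (Δ x))
  simp only [LinearMap.comp_apply, LinearEquiv.coe_coe] at step6
  rw [step6]
  have step7 := LinearMap.congr_fun (L7 pA pH ξ hξ) (Δ x)
  simp only [LinearMap.comp_apply] at step7
  rw [step7]


end Lemmas

set_option maxHeartbeats 1600000 in
/-- the double cross coproduct A ⋈^{φ,ψ} H is a bialgebra:
Δ_D is coassociative, has counit ε_A ⊗ ε_H, and is an algebra morphism. -/
theorem doubleCrossCoproduct_bialgebra (pA : X →ₐc[k] A) (pH : X →ₐc[k] H)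
    (ξ : X ≃ₗ[k] A ⊗[k] H)
    (hξ : ∀ x : X, ξ x = TensorProduct.map (pA : X →ₗ[k] A) (pH : X →ₗ[k] H)
      (Coalgebra.comul x)) :
    (TensorProduct.assoc k (A ⊗[k] H) (A ⊗[k] H) (A ⊗[k] H)).toLinearMap ∘ₗ
        TensorProduct.map (DeltaD pA pH ξ) LinearMap.id ∘ₗ DeltaD pA pH ξ
      = TensorProduct.map LinearMap.id (DeltaD pA pH ξ) ∘ₗ DeltaD pA pH ξ ∧
    (TensorProduct.lid k (A ⊗[k] H)).toLinearMap ∘ₗ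
        TensorProduct.map (Coalgebra.counit : A ⊗[k] H →ₗ[k] k) LinearMap.id ∘ₗ
        DeltaD pA pH ξ
      = LinearMap.id ∧
    (TensorProduct.rid k (A ⊗[k] H)).toLinearMap ∘ₗ
        TensorProduct.map LinearMap.id (Coalgebra.counit : A ⊗[k] H →ₗ[k] k) ∘ₗ
        DeltaD pA pH ξ
      = LinearMap.id ∧
    (∀ u v : A ⊗[k] H, DeltaD pA pH ξ (u * v) = DeltaD pA pH ξ u * DeltaD pA pH ξ v) ∧
    DeltaD pA pH ξ ((1 : A) ⊗ₜ[k] (1 : H))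
      = ((1 : A) ⊗ₜ[k] (1 : H)) ⊗ₜ[k] ((1 : A) ⊗ₜ[k] (1 : H)) := by
  classical
  have hkeyM : DeltaD pA pH ξ ∘ₗ ξ.toLinearMap
      = TensorProduct.map ξ.toLinearMap ξ.toLinearMap ∘ₗ
        (Coalgebra.comul : X →ₗ[k] X ⊗[k] X) :=
    LinearMap.ext fun x => hkey pA pH ξ hξ x
  refine ⟨?_, ?_, ?_, ?_, ?_⟩
  · -- coassociativity
    apply LinearMap.ext; intro u
    obtain ⟨x, rfl⟩ := ξ.surjective u
    have c1 : TensorProduct.map (DeltaD pA pH ξ) LinearMap.id ∘ₗ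
          TensorProduct.map ξ.toLinearMap ξ.toLinearMap
        = TensorProduct.map (TensorProduct.map ξ.toLinearMap ξ.toLinearMap) ξ.toLinearMap ∘ₗ
          TensorProduct.map (Coalgebra.comul : X →ₗ[k] X ⊗[k] X) LinearMap.id := by
      rw [← TensorProduct.map_comp, ← TensorProduct.map_comp, hkeyM,
        LinearMap.comp_id, LinearMap.id_comp]
    have c2 : TensorProduct.map LinearMap.id (DeltaD pA pH ξ) ∘ₗ
          TensorProduct.map ξ.toLinearMap ξ.toLinearMap
        = TensorProduct.map ξ.toLinearMap (TensorProduct.map ξ.toLinearMap ξ.toLinearMap) ∘ₗ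
          TensorProduct.map LinearMap.id (Coalgebra.comul : X →ₗ[k] X ⊗[k] X) := by
      rw [← TensorProduct.map_comp, ← TensorProduct.map_comp, hkeyM,
        LinearMap.comp_id, LinearMap.id_comp]
    have c1' := LinearMap.congr_fun c1 ((Coalgebra.comul : X →ₗ[k] X ⊗[k] X) x)
    have c2' := LinearMap.congr_fun c2 ((Coalgebra.comul : X →ₗ[k] X ⊗[k] X) x)
    simp only [LinearMap.comp_apply] at c1' c2'
    simp only [LinearMap.comp_apply, LinearEquiv.coe_coe]
    rw [hkey pA pH ξ hξ x, c1', c2', ← TensorProduct.map_map_assoc]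
    congr 1
    have : TensorProduct.map (Coalgebra.comul : X →ₗ[k] X ⊗[k] X) LinearMap.id
          ((Coalgebra.comul : X →ₗ[k] X ⊗[k] X) x)
        = (Coalgebra.comul : X →ₗ[k] X ⊗[k] X).rTensor X
          ((Coalgebra.comul : X →ₗ[k] X ⊗[k] X) x) := rfl
    rw [this, Coalgebra.coassoc_apply]
    rfl
  · -- left counit
    apply LinearMap.ext; intro u
    obtain ⟨x, rfl⟩ := ξ.surjective u
    simp only [LinearMap.comp_apply, LinearEquiv.coe_coe, LinearMap.id_coe, id_eq]
    rw [hkey pA pH ξ hξ x]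
    have cε : (Coalgebra.counit : A ⊗[k] H →ₗ[k] k) ∘ₗ
          TensorProduct.map (pA : X →ₗ[k] A) (pH : X →ₗ[k] H)
        = LinearMap.mul' k k ∘ₗ
          TensorProduct.map (Coalgebra.counit : X →ₗ[k] k) (Coalgebra.counit : X →ₗ[k] k) := by
      rw [show (Coalgebra.counit : A ⊗[k] H →ₗ[k] k) = LinearMap.mul' k k ∘ₗ
          TensorProduct.map (Coalgebra.counit : A →ₗ[k] k) (Coalgebra.counit : H →ₗ[k] k) from
        TensorProduct.ext' fun a b => by
          simp [TensorProduct.counit_tmul, mul_comm]]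
      rw [LinearMap.comp_assoc, ← TensorProduct.map_comp]
      have hA : (Coalgebra.counit : A →ₗ[k] k) ∘ₗ (pA : X →ₗ[k] A)
          = (Coalgebra.counit : X →ₗ[k] k) := CoalgHomClass.counit_comp (pA : X →ₗc[k] A)
      have hB : (Coalgebra.counit : H →ₗ[k] k) ∘ₗ (pH : X →ₗ[k] H)
          = (Coalgebra.counit : X →ₗ[k] k) := CoalgHomClass.counit_comp (pH : X →ₗc[k] H)
      rw [hA, hB]
    have c3 : TensorProduct.map (Coalgebra.counit : A ⊗[k] H →ₗ[k] k) LinearMap.id ∘ₗ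
          TensorProduct.map ξ.toLinearMap ξ.toLinearMap
        = TensorProduct.map (LinearMap.mul' k k ∘ₗ
            TensorProduct.map (Coalgebra.counit : X →ₗ[k] k) (Coalgebra.counit : X →ₗ[k] k)
              ∘ₗ (Coalgebra.comul : X →ₗ[k] X ⊗[k] X)) ξ.toLinearMap := by
      rw [← TensorProduct.map_comp, LinearMap.id_comp]
      congr 1
      apply LinearMap.ext; intro y
      have := LinearMap.congr_fun cε ((Coalgebra.comul : X →ₗ[k] X ⊗[k] X) y)
      simp only [LinearMap.comp_apply] at this ⊢
      rw [show ξ.toLinearMap y = ξ y from rfl, hξ y, this]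
    have c3' := LinearMap.congr_fun c3 ((Coalgebra.comul : X →ₗ[k] X ⊗[k] X) x)
    simp only [LinearMap.comp_apply] at c3'
    rw [c3']
    -- now compute mul' (map ε ε (comul x)) = ε x and finish
    have c4 : ∀ y : X, LinearMap.mul' k k
        (TensorProduct.map (Coalgebra.counit : X →ₗ[k] k) (Coalgebra.counit : X →ₗ[k] k)
          ((Coalgebra.comul : X →ₗ[k] X ⊗[k] X) y)) = Coalgebra.counit y := by
      intro y
      have h5 : TensorProduct.map (Coalgebra.counit : X →ₗ[k] k)
            (Coalgebra.counit : X →ₗ[k] k) ((Coalgebra.comul : X →ₗ[k] X ⊗[k] X) y)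
          = (Coalgebra.counit : X →ₗ[k] k).lTensor k
            ((Coalgebra.counit : X →ₗ[k] k).rTensor X ((Coalgebra.comul : X →ₗ[k] X ⊗[k] X) y)) := by
        have := LinearMap.congr_fun
          (LinearMap.lTensor_comp_rTensor (R := k) (f := (Coalgebra.counit : X →ₗ[k] k))
            (g := (Coalgebra.counit : X →ₗ[k] k))) ((Coalgebra.comul : X →ₗ[k] X ⊗[k] X) y)
        simp only [LinearMap.comp_apply] at this
        rw [this]
      rw [h5, Coalgebra.rTensor_counit_comul]
      simp [LinearMap.mul'_apply]
    have c5 : TensorProduct.map (LinearMap.mul' k k ∘ₗ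
          TensorProduct.map (Coalgebra.counit : X →ₗ[k] k) (Coalgebra.counit : X →ₗ[k] k)
            ∘ₗ (Coalgebra.comul : X →ₗ[k] X ⊗[k] X)) ξ.toLinearMap
        = TensorProduct.map (Coalgebra.counit : X →ₗ[k] k) ξ.toLinearMap := by
      congr 1
      exact LinearMap.ext fun y => by
        simpa only [LinearMap.comp_apply] using c4 y
    rw [c5]
    have c6 : TensorProduct.map (Coalgebra.counit : X →ₗ[k] k) ξ.toLinearMap
        = TensorProduct.map (LinearMap.id : k →ₗ[k] k) ξ.toLinearMap ∘ₗ
          TensorProduct.map (Coalgebra.counit : X →ₗ[k] k) (LinearMap.id : X →ₗ[k] X) := by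
      rw [← TensorProduct.map_comp, LinearMap.id_comp, LinearMap.comp_id]
    rw [c6]
    have c7 : TensorProduct.map (Coalgebra.counit : X →ₗ[k] k) (LinearMap.id : X →ₗ[k] X)
          ((Coalgebra.comul : X →ₗ[k] X ⊗[k] X) x)
        = (Coalgebra.counit : X →ₗ[k] k).rTensor X
          ((Coalgebra.comul : X →ₗ[k] X ⊗[k] X) x) := rfl
    simp only [LinearMap.comp_apply, c7, Coalgebra.rTensor_counit_comul,
      TensorProduct.map_tmul, LinearMap.id_coe, id_eq, TensorProduct.lid_tmul, one_smul]
    rfl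
  · -- right counit
    apply LinearMap.ext; intro u
    obtain ⟨x, rfl⟩ := ξ.surjective u
    simp only [LinearMap.comp_apply, LinearEquiv.coe_coe, LinearMap.id_coe, id_eq]
    rw [hkey pA pH ξ hξ x]
    have cε : (Coalgebra.counit : A ⊗[k] H →ₗ[k] k) ∘ₗ
          TensorProduct.map (pA : X →ₗ[k] A) (pH : X →ₗ[k] H)
        = LinearMap.mul' k k ∘ₗ
          TensorProduct.map (Coalgebra.counit : X →ₗ[k] k) (Coalgebra.counit : X →ₗ[k] k) := by
      rw [show (Coalgebra.counit : A ⊗[k] H →ₗ[k] k) = LinearMap.mul' k k ∘ₗ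
          TensorProduct.map (Coalgebra.counit : A →ₗ[k] k) (Coalgebra.counit : H →ₗ[k] k) from
        TensorProduct.ext' fun a b => by
          simp [TensorProduct.counit_tmul, mul_comm]]
      rw [LinearMap.comp_assoc, ← TensorProduct.map_comp]
      have hA : (Coalgebra.counit : A →ₗ[k] k) ∘ₗ (pA : X →ₗ[k] A)
          = (Coalgebra.counit : X →ₗ[k] k) := CoalgHomClass.counit_comp (pA : X →ₗc[k] A)
      have hB : (Coalgebra.counit : H →ₗ[k] k) ∘ₗ (pH : X →ₗ[k] H)
          = (Coalgebra.counit : X →ₗ[k] k) := CoalgHomClass.counit_comp (pH : X →ₗc[k] H)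
      rw [hA, hB]
    have c4 : ∀ y : X, LinearMap.mul' k k
        (TensorProduct.map (Coalgebra.counit : X →ₗ[k] k) (Coalgebra.counit : X →ₗ[k] k)
          ((Coalgebra.comul : X →ₗ[k] X ⊗[k] X) y)) = Coalgebra.counit y := by
      intro y
      have h5 : TensorProduct.map (Coalgebra.counit : X →ₗ[k] k)
            (Coalgebra.counit : X →ₗ[k] k) ((Coalgebra.comul : X →ₗ[k] X ⊗[k] X) y)
          = (Coalgebra.counit : X →ₗ[k] k).lTensor k
            ((Coalgebra.counit : X →ₗ[k] k).rTensor X ((Coalgebra.comul : X →ₗ[k] X ⊗[k] X) y)) := by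
        have := LinearMap.congr_fun
          (LinearMap.lTensor_comp_rTensor (R := k) (f := (Coalgebra.counit : X →ₗ[k] k))
            (g := (Coalgebra.counit : X →ₗ[k] k))) ((Coalgebra.comul : X →ₗ[k] X ⊗[k] X) y)
        simp only [LinearMap.comp_apply] at this
        rw [this]
      rw [h5, Coalgebra.rTensor_counit_comul]
      simp [LinearMap.mul'_apply]
    have c3 : TensorProduct.map LinearMap.id (Coalgebra.counit : A ⊗[k] H →ₗ[k] k) ∘ₗ
          TensorProduct.map ξ.toLinearMap ξ.toLinearMap
        = TensorProduct.map ξ.toLinearMap (LinearMap.mul' k k ∘ₗ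
            TensorProduct.map (Coalgebra.counit : X →ₗ[k] k) (Coalgebra.counit : X →ₗ[k] k)
              ∘ₗ (Coalgebra.comul : X →ₗ[k] X ⊗[k] X)) := by
      rw [← TensorProduct.map_comp, LinearMap.id_comp]
      congr 1
      apply LinearMap.ext; intro y
      have := LinearMap.congr_fun cε ((Coalgebra.comul : X →ₗ[k] X ⊗[k] X) y)
      simp only [LinearMap.comp_apply] at this ⊢
      rw [show ξ.toLinearMap y = ξ y from rfl, hξ y, this]
    have c3' := LinearMap.congr_fun c3 ((Coalgebra.comul : X →ₗ[k] X ⊗[k] X) x)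
    simp only [LinearMap.comp_apply] at c3'
    rw [c3']
    have c5 : TensorProduct.map ξ.toLinearMap (LinearMap.mul' k k ∘ₗ
          TensorProduct.map (Coalgebra.counit : X →ₗ[k] k) (Coalgebra.counit : X →ₗ[k] k)
            ∘ₗ (Coalgebra.comul : X →ₗ[k] X ⊗[k] X))
        = TensorProduct.map ξ.toLinearMap (Coalgebra.counit : X →ₗ[k] k) := by
      congr 1
      exact LinearMap.ext fun y => by
        simpa only [LinearMap.comp_apply] using c4 y
    rw [c5]
    have c6 : TensorProduct.map ξ.toLinearMap (Coalgebra.counit : X →ₗ[k] k)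
        = TensorProduct.map ξ.toLinearMap (LinearMap.id : k →ₗ[k] k) ∘ₗ
          TensorProduct.map (LinearMap.id : X →ₗ[k] X) (Coalgebra.counit : X →ₗ[k] k) := by
      rw [← TensorProduct.map_comp, LinearMap.id_comp, LinearMap.comp_id]
    rw [c6]
    have c7 : TensorProduct.map (LinearMap.id : X →ₗ[k] X) (Coalgebra.counit : X →ₗ[k] k)
          ((Coalgebra.comul : X →ₗ[k] X ⊗[k] X) x)
        = (Coalgebra.counit : X →ₗ[k] k).lTensor X
          ((Coalgebra.comul : X →ₗ[k] X ⊗[k] X) x) := rfl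
    simp only [LinearMap.comp_apply, c7, Coalgebra.lTensor_counit_comul,
      TensorProduct.map_tmul, LinearMap.id_coe, id_eq, TensorProduct.rid_tmul, one_smul]
    rfl
  · -- multiplicativity
    intro u v
    obtain ⟨x, rfl⟩ := ξ.surjective u
    obtain ⟨y, rfl⟩ := ξ.surjective v
    rw [← xi_mul pA pH ξ hξ x y, hkey pA pH ξ hξ (x * y), hkey pA pH ξ hξ x,
      hkey pA pH ξ hξ y, Bialgebra.comul_mul]
    exact aux_map_mul ξ.toLinearMap ξ.toLinearMap
      (fun s t => xi_mul pA pH ξ hξ s t) (fun s t => xi_mul pA pH ξ hξ s t) _ _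
  · -- unit
    have h1 : (1 : A) ⊗ₜ[k] (1 : H) = ξ 1 := by
      rw [xi_one pA pH ξ hξ, Algebra.TensorProduct.one_def]
    rw [h1, hkey pA pH ξ hξ 1, Bialgebra.comul_one, Algebra.TensorProduct.one_def,
      TensorProduct.map_tmul]
    rw [show ξ.toLinearMap (1 : X) = ξ 1 from rfl, xi_one pA pH ξ hξ,
      Algebra.TensorProduct.one_def]
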